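/- If r = exp(ω ê) with 0 < ω < π and e a unit vector, then r − rᵀ = 2 sin(ω) ê; hence the matrix logarithm of r is given by log(r) = (ω / (2 sin ω)) (r − rᵀ). -/

import Mathlib

open Matrix

/-- The hat map: the skew-symmetric matrix `â` of `a ∈ ℝ³`, satisfying `â v = a × v`. -/
def hat (a : Fin 3 → ℝ) : Matrix (Fin 3) (Fin 3) ℝ :=
  !![0, -a 2, a 1; a 2, 0, -a 0; -a 1, a 0, 0]

lemma hat_cube (e : Fin 3 → ℝ) (he : e ⬝ᵥ e = 1) : hat e ^ 3 = -hat e := by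
  simp only [dotProduct, Fin.sum_univ_three] at he
  ext i j
  fin_cases i <;> fin_cases j <;>
    simp [hat, pow_succ, Matrix.mul_apply, Fin.sum_univ_three]
  · ring
  · linear_combination e 2 * he
  · linear_combination (-e 1) * he
  · linear_combination (-e 2) * he
  · ring
  · linear_combination e 0 * he
  · linear_combination e 1 * he
  · linear_combination (-e 0) * he
  · ring

lemma hat_pow_odd (e : Fin 3 → ℝ) (he : e ⬝ᵥ e = 1) (k : ℕ) :
    hat e ^ (2 * k + 1) = ((-1 : ℝ) ^ k) • hat e := by
  induction k with
  | zero => simp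
  | succ n ih =>
    have h1 : 2 * (n + 1) + 1 = (2 * n + 1) + 2 := by ring
    have h3 : hat e * hat e ^ 2 = hat e ^ 3 := (pow_succ' (hat e) 2).symm
    rw [h1, pow_add, ih, smul_mul_assoc, h3, hat_cube e he, pow_succ]
    simp [mul_neg_one, neg_smul, smul_neg]

set_option maxHeartbeats 1000000 in
/-- If `r = exp(ω ê)` with `0 < ω < π` and `e` a unit vector, then
`r - rᵀ = 2 sin(ω) ê`; hence the matrix logarithm of `r` (namely `ω ê`) is given by
`log r = (ω / (2 sin ω)) (r - rᵀ)`. -/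
theorem stmt_16 (e : Fin 3 → ℝ) (he : e ⬝ᵥ e = 1) (ω : ℝ)
    (hω₀ : 0 < ω) (hωπ : ω < Real.pi)
    (r : Matrix (Fin 3) (Fin 3) ℝ) (hr : r = NormedSpace.exp (ω • hat e)) :
    r - rᵀ = (2 * Real.sin ω) • hat e ∧
    (ω / (2 * Real.sin ω)) • (r - rᵀ) = ω • hat e := by
  set K := hat e with hK
  have hKt : Kᵀ = -K := by
    ext i j; fin_cases i <;> fin_cases j <;> simp [hK, hat]
  letI : SeminormedRing (Matrix (Fin 3) (Fin 3) ℝ) := Matrix.linftyOpSemiNormedRing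
  letI : NormedRing (Matrix (Fin 3) (Fin 3) ℝ) := Matrix.linftyOpNormedRing
  letI : NormedAlgebra ℝ (Matrix (Fin 3) (Fin 3) ℝ) := Matrix.linftyOpNormedAlgebra
  have hf : HasSum (fun n : ℕ => ((n.factorial : ℝ))⁻¹ • (ω • K) ^ n) r := by
    rw [hr]; exact NormedSpace.exp_series_hasSum_exp' _
  have hg : HasSum (fun n : ℕ => ((n.factorial : ℝ))⁻¹ • (-(ω • K)) ^ n) rᵀ := by
    have h1 : rᵀ = NormedSpace.exp (-(ω • K)) := by
      rw [hr, ← Matrix.exp_transpose, transpose_smul, hKt, smul_neg]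
    rw [h1]; exact NormedSpace.exp_series_hasSum_exp' _
  set F : ℕ → Matrix (Fin 3) (Fin 3) ℝ := fun n =>
    ((n.factorial : ℝ))⁻¹ • (ω • K) ^ n - ((n.factorial : ℝ))⁻¹ • (-(ω • K)) ^ n with hF
  have hsub : HasSum F (r - rᵀ) := hf.sub hg
  have hinj : Function.Injective (fun k : ℕ => 2 * k + 1) := fun a b h => by simp only at h; omega
  have hzero : ∀ x ∉ Set.range (fun k : ℕ => 2 * k + 1), F x = 0 := by
    intro x hx
    have hev : Even x := by
      rcases Nat.even_or_odd x with h | ⟨k, hk⟩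
      · exact h
      · exact absurd ⟨k, by show 2 * k + 1 = x; omega⟩ hx
    simp [hF, hev.neg_pow]
  have hcomp : HasSum (F ∘ fun k : ℕ => 2 * k + 1) (r - rᵀ) :=
    (hinj.hasSum_iff hzero).mpr hsub
  have hFval : (F ∘ fun k : ℕ => 2 * k + 1) =
      fun k : ℕ => (2 * ((-1 : ℝ) ^ k * ω ^ (2 * k + 1) / ((2 * k + 1).factorial : ℝ))) • K := by
    funext k
    have hodd : Odd (2 * k + 1) := ⟨k, by omega⟩
    simp only [hF, Function.comp_apply, hodd.neg_pow, smul_neg, sub_neg_eq_add]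
    rw [smul_pow, hat_pow_odd e he k]
    rw [← hK, smul_smul, smul_smul, ← add_smul]
    congr 1
    have : ((2 * k + 1).factorial : ℝ) ≠ 0 := Nat.cast_ne_zero.mpr (Nat.factorial_ne_zero _)
    field_simp
    ring
  rw [hFval] at hcomp
  have hsin : HasSum
      (fun k : ℕ => (2 * ((-1 : ℝ) ^ k * ω ^ (2 * k + 1) / ((2 * k + 1).factorial : ℝ))) • K)
      ((2 * Real.sin ω) • K) := ((Real.hasSum_sin ω).mul_left 2).smul_const K
  have h1 : r - rᵀ = (2 * Real.sin ω) • K := hcomp.unique hsin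
  refine ⟨h1, ?_⟩
  rw [h1, smul_smul, div_mul_cancel₀]
  have := Real.sin_pos_of_pos_of_lt_pi hω₀ hωπ
  positivity
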